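/- arXiv:2605.09144 — 3 statements merged into one kernel-verified Lean document; each statement's English description precedes it below -/
import Mathlib

section
/- Let H be a real Hilbert space, N a positive integer, and F₁,…,F_N : H → ℝ differentiable functions each having L-Lipschitz gradient (L > 0). Let F = (1/N)·∑_{i=1}^N Fᵢ. Fix θ ∈ H with ∇Fᵢ(θ) ≠ 0 for every i, and fix ρ > 0. On a probability space, let g₁,…,g_N be Bochner-integrable random vectors in H with gᵢ ≠ 0 almost surely. Define δᵢ = ∇Fᵢ(θ) − ∇F(θ), ζᵢ = gᵢ − ∇Fᵢ(θ), the local flatness proxies sᵢ = Fᵢ(θ + ρ·gᵢ/‖gᵢ‖) − Fᵢ(θ), their mean s̄ = (1/N)·∑_{j=1}^N sⱼ, and the flatness incompatibility Δ_FI = (1/N)·∑_{i=1}^N (sᵢ − s̄)². Assume Δ_FI and each ‖ζᵢ‖² are integrable. Then 𝔼[Δ_FI] ≤ (3ρ²/N)·∑_{i=1}^N 𝔼[‖δᵢ‖² + 4‖ζᵢ‖²] + (3/4)·L²·ρ⁴. -/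
open MeasureTheory
open scoped RealInnerProductSpace

/-- Descent lemma: a function with `L`-Lipschitz gradient satisfies the quadratic bound. -/
lemma descent_lemma_aux {H : Type*} [NormedAddCommGroup H] [InnerProductSpace ℝ H]
    [CompleteSpace H] {f : H → ℝ} {L : ℝ} (hL : 0 ≤ L) (hdiff : Differentiable ℝ f)
    (hlip : ∀ x y : H, ‖gradient f x - gradient f y‖ ≤ L * ‖x - y‖)
    (x h : H) :
    |f (x + h) - f x - ⟪gradient f x, h⟫| ≤ L / 2 * ‖h‖ ^ 2 := by
  set K := ⟪gradient f x, h⟫ with hK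
  have hline : ∀ t : ℝ, HasDerivAt (fun t : ℝ => x + t • h) h t := fun t => by
    simpa using ((hasDerivAt_id t).smul_const h).const_add x
  have hphi : ∀ t : ℝ, HasDerivAt (fun t : ℝ => f (x + t • h))
      ⟪gradient f (x + t • h), h⟫ t := fun t => by
    have hf := ((hdiff (x + t • h)).hasGradientAt).hasFDerivAt
    simpa [InnerProductSpace.toDual_apply_apply, Function.comp_def] using hf.comp_hasDerivAt t (hline t)
  have hinner : ∀ t : ℝ, 0 ≤ t →
      |⟪gradient f (x + t • h), h⟫ - K| ≤ L * ‖h‖ ^ 2 * t := by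
    intro t ht
    have h1 : |⟪gradient f (x + t • h) - gradient f x, h⟫| ≤
        ‖gradient f (x + t • h) - gradient f x‖ * ‖h‖ := abs_real_inner_le_norm _ _
    have h2 : ‖gradient f (x + t • h) - gradient f x‖ ≤ L * (t * ‖h‖) := by
      have := hlip (x + t • h) x
      rwa [add_sub_cancel_left, norm_smul, Real.norm_eq_abs, abs_of_nonneg ht] at this
    have h3 : ⟪gradient f (x + t • h) - gradient f x, h⟫ =
        ⟪gradient f (x + t • h), h⟫ - K := by rw [inner_sub_left, hK]
    rw [h3] at h1
    nlinarith [norm_nonneg h, norm_nonneg (gradient f (x + t • h) - gradient f x)]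
  -- upper bound via antitone auxiliary function
  have hupper : f (x + h) - f x - K ≤ L / 2 * ‖h‖ ^ 2 := by
    set ψ : ℝ → ℝ := fun t => f (x + t • h) - t * K - L / 2 * ‖h‖ ^ 2 * t ^ 2 with hψ
    have hψd : ∀ t : ℝ, HasDerivAt ψ
        (⟪gradient f (x + t • h), h⟫ - K - L / 2 * ‖h‖ ^ 2 * (2 * t)) t := by
      intro t
      have := ((hphi t).sub (hasDerivAt_mul_const K)).sub
        (((hasDerivAt_pow 2 t)).const_mul (L / 2 * ‖h‖ ^ 2))
      simpa [hψ, mul_comm, mul_assoc, mul_left_comm, Pi.sub_def] using this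
    have hanti : AntitoneOn ψ (Set.Icc 0 1) := by
      apply antitoneOn_of_deriv_nonpos (convex_Icc 0 1)
      · exact fun t _ => (hψd t).continuousAt.continuousWithinAt
      · exact fun t _ => ((hψd t).differentiableAt).differentiableWithinAt
      · intro t ht
        rw [interior_Icc] at ht
        rw [(hψd t).deriv]
        have := (abs_le.1 (hinner t ht.1.le)).2
        nlinarith [ht.1]
    have := hanti (Set.mem_Icc.2 ⟨le_refl 0, zero_le_one⟩)
      (Set.mem_Icc.2 ⟨zero_le_one, le_refl 1⟩) zero_le_one
    simp only [hψ, zero_smul, add_zero, one_smul, zero_mul, one_pow, mul_zero, sub_zero,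
      one_mul, zero_pow] at this
    linarith [this]
  have hlower : -(L / 2 * ‖h‖ ^ 2) ≤ f (x + h) - f x - K := by
    set ψ : ℝ → ℝ := fun t => f (x + t • h) - t * K + L / 2 * ‖h‖ ^ 2 * t ^ 2 with hψ
    have hψd : ∀ t : ℝ, HasDerivAt ψ
        (⟪gradient f (x + t • h), h⟫ - K + L / 2 * ‖h‖ ^ 2 * (2 * t)) t := by
      intro t
      have := ((hphi t).sub (hasDerivAt_mul_const K)).add
        (((hasDerivAt_pow 2 t)).const_mul (L / 2 * ‖h‖ ^ 2))
      simpa [hψ, mul_comm, mul_assoc, mul_left_comm, Pi.sub_def, Pi.add_def] using this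
    have hmono : MonotoneOn ψ (Set.Icc 0 1) := by
      apply monotoneOn_of_deriv_nonneg (convex_Icc 0 1)
      · exact fun t _ => (hψd t).continuousAt.continuousWithinAt
      · exact fun t _ => ((hψd t).differentiableAt).differentiableWithinAt
      · intro t ht
        rw [interior_Icc] at ht
        rw [(hψd t).deriv]
        have := (abs_le.1 (hinner t ht.1.le)).1
        nlinarith [ht.1]
    have := hmono (Set.mem_Icc.2 ⟨le_refl 0, zero_le_one⟩)
      (Set.mem_Icc.2 ⟨zero_le_one, le_refl 1⟩) zero_le_one
    simp only [hψ, zero_smul, add_zero, one_smul, zero_mul, one_pow, mul_zero, sub_zero,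
      one_mul, zero_pow] at this
    linarith [this]
  exact abs_le.2 ⟨hlower, hupper⟩

/-- The sum of squared deviations from the mean is at most that from any constant. -/
lemma sum_sq_sub_mean_le {N : ℕ} (hN : 0 < N) (a : Fin N → ℝ) (c : ℝ) :
    ∑ i, (a i - (1 / (N : ℝ)) * ∑ j, a j) ^ 2 ≤ ∑ i, (a i - c) ^ 2 := by
  set m := (1 / (N : ℝ)) * ∑ j, a j with hm
  have hNne : (N : ℝ) ≠ 0 := Nat.cast_ne_zero.2 hN.ne'
  have hsum : ∑ i, (a i - m) = 0 := by
    rw [Finset.sum_sub_distrib, Finset.sum_const, Finset.card_univ, Fintype.card_fin,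
      nsmul_eq_mul, hm]
    field_simp
    ring
  have key : ∀ i : Fin N, (a i - c) ^ 2 =
      (a i - m) ^ 2 + (2 * (m - c)) * (a i - m) + (m - c) ^ 2 := fun i => by ring
  calc ∑ i, (a i - m) ^ 2
      ≤ ∑ i, (a i - m) ^ 2 + (N : ℝ) * (m - c) ^ 2 := le_add_of_nonneg_right (by positivity)
    _ = ∑ i, (a i - c) ^ 2 := by
        simp_rw [key]
        rw [Finset.sum_add_distrib, Finset.sum_add_distrib, ← Finset.mul_sum, hsum,
          Finset.sum_const, Finset.card_univ, Fintype.card_fin, nsmul_eq_mul]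
        ring

lemma three_sq_aux (a b c : ℝ) : (a + b + c) ^ 2 ≤ 3 * a ^ 2 + 3 * b ^ 2 + 3 * c ^ 2 := by
  nlinarith [sq_nonneg (a - b), sq_nonneg (a - c), sq_nonneg (b - c)]

/-- Lemma 1: expected flatness incompatibility bound. -/
theorem flatness_incompatibility_expectation
    {H : Type*} [NormedAddCommGroup H] [InnerProductSpace ℝ H] [CompleteSpace H]
    {Ω : Type*} [MeasurableSpace Ω] (μ : Measure Ω) [IsProbabilityMeasure μ]
    {N : ℕ} (hN : 0 < N)
    (Fi : Fin N → H → ℝ) (L : ℝ) (hL : 0 < L)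
    (hdiff : ∀ i, Differentiable ℝ (Fi i))
    (hlip : ∀ i, ∀ x y : H, ‖gradient (Fi i) x - gradient (Fi i) y‖ ≤ L * ‖x - y‖)
    (F : H → ℝ) (hF : F = fun x => (1 / (N : ℝ)) * ∑ i, Fi i x)
    (θ : H) (hθ : ∀ i, gradient (Fi i) θ ≠ 0)
    (ρ : ℝ) (hρ : 0 < ρ)
    (g : Fin N → Ω → H)
    (hg_int : ∀ i, Integrable (g i) μ)
    (hg_ne : ∀ i, ∀ᵐ ω ∂μ, g i ω ≠ 0)
    (δ : Fin N → H) (hδ : ∀ i, δ i = gradient (Fi i) θ - gradient F θ)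
    (ζ : Fin N → Ω → H) (hζ : ∀ i ω, ζ i ω = g i ω - gradient (Fi i) θ)
    (s : Fin N → Ω → ℝ)
    (hs : ∀ i ω, s i ω = Fi i (θ + (ρ / ‖g i ω‖) • g i ω) - Fi i θ)
    (sbar : Ω → ℝ) (hsbar : ∀ ω, sbar ω = (1 / (N : ℝ)) * ∑ j, s j ω)
    (ΔFI : Ω → ℝ) (hΔ : ∀ ω, ΔFI ω = (1 / (N : ℝ)) * ∑ i, (s i ω - sbar ω) ^ 2)
    (hΔ_int : Integrable ΔFI μ)
    (hζ_int : ∀ i, Integrable (fun ω => ‖ζ i ω‖ ^ 2) μ) :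
    ∫ ω, ΔFI ω ∂μ ≤
      (3 * ρ ^ 2 / (N : ℝ)) * ∑ i, (∫ ω, (‖δ i‖ ^ 2 + 4 * ‖ζ i ω‖ ^ 2) ∂μ)
        + (3 / 4) * L ^ 2 * ρ ^ 4 := by
  have hNpos : (0 : ℝ) < (N : ℝ) := Nat.cast_pos.2 hN
  set B : Ω → ℝ := fun ω =>
    (3 * ρ ^ 2 / (N : ℝ)) * ∑ i, (‖δ i‖ ^ 2 + 4 * ‖ζ i ω‖ ^ 2) + (3 / 4) * L ^ 2 * ρ ^ 4
    with hB
  have hterm_int : ∀ i : Fin N, Integrable (fun ω => ‖δ i‖ ^ 2 + 4 * ‖ζ i ω‖ ^ 2) μ :=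
    fun i => (integrable_const _).add ((hζ_int i).const_mul 4)
  have hB_int : Integrable B μ := by
    apply Integrable.add _ (integrable_const _)
    exact (integrable_finset_sum _ (fun i _ => hterm_int i)).const_mul _
  -- pointwise a.e. bound
  have hae : ∀ᵐ ω ∂μ, ΔFI ω ≤ B ω := by
    have hall : ∀ᵐ ω ∂μ, ∀ i, g i ω ≠ 0 := (ae_all_iff).2 hg_ne
    filter_upwards [hall] with ω hω
    set c : ℝ := ρ * ‖gradient F θ‖ with hc
    -- per index bound
    have hper : ∀ i : Fin N, (s i ω - c) ^ 2 ≤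
        3 * ρ ^ 2 * ‖δ i‖ ^ 2 + 12 * ρ ^ 2 * ‖ζ i ω‖ ^ 2 + (3 / 4) * L ^ 2 * ρ ^ 4 := by
      intro i
      have hgne : g i ω ≠ 0 := hω i
      have hng : (0 : ℝ) < ‖g i ω‖ := norm_pos_iff.2 hgne
      set v := gradient (Fi i) θ with hv
      set u := (ρ / ‖g i ω‖) • g i ω with hu
      have hnu : ‖u‖ = ρ := by
        rw [hu, norm_smul, Real.norm_eq_abs, abs_div, abs_of_pos hρ, abs_of_pos hng]
        field_simp
      have f1 : |s i ω - ⟪v, u⟫| ≤ L / 2 * ρ ^ 2 := by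
        have := descent_lemma_aux hL.le (hdiff i) (hlip i) θ u
        rw [hnu] at this
        rw [hs i ω]
        exact this
      have hIval : ⟪v, u⟫ = ρ * ‖g i ω‖ - (ρ / ‖g i ω‖) * ⟪ζ i ω, g i ω⟫ := by
        have hvz : v = g i ω - ζ i ω := by rw [hζ i ω]; abel
        rw [hu, real_inner_smul_right, hvz, inner_sub_left,
          real_inner_self_eq_norm_sq]
        field_simp
      have f2 : |(ρ / ‖g i ω‖) * ⟪ζ i ω, g i ω⟫| ≤ ρ * ‖ζ i ω‖ := by
        rw [abs_mul, abs_div, abs_of_pos hρ, abs_of_pos hng]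
        have := abs_real_inner_le_norm (ζ i ω) (g i ω)
        rw [div_mul_eq_mul_div, div_le_iff₀ hng]
        calc ρ * |⟪ζ i ω, g i ω⟫| ≤ ρ * (‖ζ i ω‖ * ‖g i ω‖) :=
              mul_le_mul_of_nonneg_left this hρ.le
          _ = ρ * ‖ζ i ω‖ * ‖g i ω‖ := by ring
      have f3 : |‖g i ω‖ - ‖v‖| ≤ ‖ζ i ω‖ := by
        have := abs_norm_sub_norm_le (g i ω) v
        rwa [← hζ i ω] at this
      have f4 : |‖v‖ - ‖gradient F θ‖| ≤ ‖δ i‖ := by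
        have := abs_norm_sub_norm_le v (gradient F θ)
        rwa [← hδ i] at this
      have habs : |s i ω - c| ≤ ρ * ‖δ i‖ + 2 * ρ * ‖ζ i ω‖ + L / 2 * ρ ^ 2 := by
        rw [hc, abs_le] at *
        rw [hIval] at f1
        have f3a := mul_le_mul_of_nonneg_left f3.1 hρ.le
        have f3b := mul_le_mul_of_nonneg_left f3.2 hρ.le
        have f4a := mul_le_mul_of_nonneg_left f4.1 hρ.le
        have f4b := mul_le_mul_of_nonneg_left f4.2 hρ.le
        constructor
        · linarith [f1.1, f2.2, f3a, f4a]
        · linarith [f1.2, f2.1, f3b, f4b]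
      have hsq : (s i ω - c) ^ 2 ≤ (ρ * ‖δ i‖ + 2 * ρ * ‖ζ i ω‖ + L / 2 * ρ ^ 2) ^ 2 := by
        rw [← sq_abs]
        exact pow_le_pow_left₀ (abs_nonneg _) habs 2
      calc (s i ω - c) ^ 2 ≤ (ρ * ‖δ i‖ + 2 * ρ * ‖ζ i ω‖ + L / 2 * ρ ^ 2) ^ 2 := hsq
        _ ≤ 3 * (ρ * ‖δ i‖) ^ 2 + 3 * (2 * ρ * ‖ζ i ω‖) ^ 2 + 3 * (L / 2 * ρ ^ 2) ^ 2 :=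
            three_sq_aux _ _ _
        _ = 3 * ρ ^ 2 * ‖δ i‖ ^ 2 + 12 * ρ ^ 2 * ‖ζ i ω‖ ^ 2 + (3 / 4) * L ^ 2 * ρ ^ 4 := by
            ring
    -- assemble
    have hvar : ∑ i, (s i ω - sbar ω) ^ 2 ≤ ∑ i, (s i ω - c) ^ 2 := by
      have := sum_sq_sub_mean_le hN (fun i => s i ω) c
      simpa [hsbar ω] using this
    have hsum2 : ∑ i, (s i ω - c) ^ 2 ≤
        ∑ i, (3 * ρ ^ 2 * ‖δ i‖ ^ 2 + 12 * ρ ^ 2 * ‖ζ i ω‖ ^ 2 + (3 / 4) * L ^ 2 * ρ ^ 4) :=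
      Finset.sum_le_sum (fun i _ => hper i)
    rw [hΔ ω, hB]
    have hfin : ∑ i, (3 * ρ ^ 2 * ‖δ i‖ ^ 2 + 12 * ρ ^ 2 * ‖ζ i ω‖ ^ 2
          + (3 / 4) * L ^ 2 * ρ ^ 4)
        = 3 * ρ ^ 2 * (∑ i, (‖δ i‖ ^ 2 + 4 * ‖ζ i ω‖ ^ 2))
          + (N : ℝ) * ((3 / 4) * L ^ 2 * ρ ^ 4) := by
      rw [Finset.sum_add_distrib, Finset.sum_add_distrib, Finset.sum_const,
        Finset.card_univ, Fintype.card_fin, nsmul_eq_mul]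
      congr 1
      rw [← Finset.sum_add_distrib, Finset.mul_sum]
      exact Finset.sum_congr rfl (fun i _ => by ring)
    have hstep : (1 / (N : ℝ)) * ∑ i, (s i ω - sbar ω) ^ 2 ≤
        (1 / (N : ℝ)) * (3 * ρ ^ 2 * (∑ i, (‖δ i‖ ^ 2 + 4 * ‖ζ i ω‖ ^ 2))
          + (N : ℝ) * ((3 / 4) * L ^ 2 * ρ ^ 4)) := by
      apply mul_le_mul_of_nonneg_left _ (by positivity)
      rw [← hfin]
      exact le_trans hvar hsum2
    calc (1 / (N : ℝ)) * ∑ i, (s i ω - sbar ω) ^ 2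
        ≤ (1 / (N : ℝ)) * (3 * ρ ^ 2 * (∑ i, (‖δ i‖ ^ 2 + 4 * ‖ζ i ω‖ ^ 2))
            + (N : ℝ) * ((3 / 4) * L ^ 2 * ρ ^ 4)) := hstep
      _ = (3 * ρ ^ 2 / (N : ℝ)) * ∑ i, (‖δ i‖ ^ 2 + 4 * ‖ζ i ω‖ ^ 2)
            + (3 / 4) * L ^ 2 * ρ ^ 4 := by field_simp
  have hIB : ∫ ω, B ω ∂μ =
      (3 * ρ ^ 2 / (N : ℝ)) * ∑ i, (∫ ω, (‖δ i‖ ^ 2 + 4 * ‖ζ i ω‖ ^ 2) ∂μ)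
        + (3 / 4) * L ^ 2 * ρ ^ 4 := by
    rw [hB]
    rw [integral_add (((integrable_finset_sum _ (fun i _ => hterm_int i)).const_mul _))
      (integrable_const _), integral_const, integral_const_mul _ _,
      integral_finset_sum _ (fun i _ => hterm_int i)]
    simp [measure_univ]
  calc ∫ ω, ΔFI ω ∂μ ≤ ∫ ω, B ω ∂μ := integral_mono_ae hΔ_int hB_int hae
    _ = _ := hIB
end

section
/- Let H be a real Hilbert space, N a positive integer, and F₁,…,F_N : H → ℝ differentiable functions each having L-Lipschitz gradient (L > 0). Let F = (1/N)·∑_{i=1}^N Fᵢ. Fix θ ∈ H with ∇Fᵢ(θ) ≠ 0 for every i, fix ρ > 0, and fix nonzero vectors g₁,…,g_N ∈ H. Define δᵢ = ∇Fᵢ(θ) − ∇F(θ), ζᵢ = gᵢ − ∇Fᵢ(θ), sᵢ = Fᵢ(θ + ρ·gᵢ/‖gᵢ‖) − Fᵢ(θ), s̄ = (1/N)·∑_{j=1}^N sⱼ, and Δ_FI = (1/N)·∑_{i=1}^N (sᵢ − s̄)². Then Δ_FI ≤ (3ρ²/N)·∑_{i=1}^N (‖δᵢ‖² + 4‖ζᵢ‖²)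 + (3/4)·L²·ρ⁴. -/
open InnerProductSpace intervalIntegral

lemma descent_lemma {H : Type*} [NormedAddCommGroup H] [InnerProductSpace ℝ H] [CompleteSpace H]
    {f : H → ℝ} (hf : Differentiable ℝ f) {L : ℝ} (hL : 0 ≤ L)
    (hlip : ∀ x y : H, ‖gradient f x - gradient f y‖ ≤ L * ‖x - y‖) (x u : H) :
    |f (x + u) - f x - inner ℝ (gradient f x) u| ≤ L / 2 * ‖u‖ ^ 2 := by
  have hgradcont : Continuous (gradient f) := by
    apply LipschitzWith.continuous (K := Real.toNNReal L)
    apply LipschitzWith.of_dist_le_mul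
    intro a b
    simpa [dist_eq_norm, Real.coe_toNNReal L hL] using hlip a b
  set G : ℝ → ℝ := fun t => inner ℝ (gradient f (x + t • u)) u with hG
  have hinner : ∀ p : H, (inner ℝ (gradient f p) u : ℝ) = fderiv ℝ f p u := by
    intro p
    simpa [gradient] using (InnerProductSpace.toDual_symm_apply (𝕜 := ℝ) (E := H)
      (x := u) (y := fderiv ℝ f p))
  have hderiv : ∀ t : ℝ, HasDerivAt (fun t : ℝ => f (x + t • u)) (G t) t := by
    intro t
    have h1 : HasDerivAt (fun t : ℝ => x + t • u) u t := by
      simpa using ((hasDerivAt_id t).smul_const u).const_add x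
    have h2 : HasFDerivAt f (fderiv ℝ f (x + t • u)) (x + t • u) :=
      (hf (x + t • u)).hasFDerivAt
    have := h2.comp_hasDerivAt t h1
    rw [show G t = fderiv ℝ f (x + t • u) u from hinner _]; exact this
  have hGcont : Continuous G := by
    apply Continuous.inner
    · exact hgradcont.comp (by continuity)
    · exact continuous_const
  have hFTC : ∫ t in (0:ℝ)..1, G t = f (x + u) - f x := by
    have := intervalIntegral.integral_eq_sub_of_hasDerivAt
      (f := fun t : ℝ => f (x + t • u)) (f' := G)
      (fun t _ => hderiv t) (hGcont.intervalIntegrable 0 1)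
    simpa using this
  have hconst : ∫ _ in (0:ℝ)..1, G 0 = G 0 := by simp
  have key : f (x + u) - f x - inner ℝ (gradient f x) u = ∫ t in (0:ℝ)..1, (G t - G 0) := by
    rw [intervalIntegral.integral_sub (hGcont.intervalIntegrable 0 1)
      (intervalIntegrable_const), hFTC, hconst, hG]
    simp
  rw [key]
  have hbound : ∀ t ∈ Set.Icc (0:ℝ) 1, ‖G t - G 0‖ ≤ L * ‖u‖^2 * t := by
    intro t ht
    have h1 : G t - G 0 = inner ℝ (gradient f (x + t • u) - gradient f x) u := by
      simp [hG, inner_sub_left]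
    rw [h1]
    calc ‖(inner ℝ (gradient f (x + t • u) - gradient f x) u : ℝ)‖
        ≤ ‖gradient f (x + t • u) - gradient f x‖ * ‖u‖ := norm_inner_le_norm _ _
      _ ≤ (L * ‖(x + t • u) - x‖) * ‖u‖ := by
          gcongr; exact hlip _ _
      _ = L * ‖u‖^2 * t := by
          have : ‖(x + t • u) - x‖ = t * ‖u‖ := by
            simp [norm_smul, abs_of_nonneg ht.1]
          rw [this]; ring
  have hint : IntervalIntegrable (fun t : ℝ => L * ‖u‖^2 * t) MeasureTheory.volume 0 1 :=
    (continuous_const.mul continuous_id).intervalIntegrable 0 1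
  have := intervalIntegral.norm_integral_le_of_norm_le
    (g := fun t => L * ‖u‖^2 * t) (by norm_num)
      (Filter.Eventually.of_forall fun t ht => hbound t ⟨ht.1.le, ht.2⟩)
    hint
  rw [Real.norm_eq_abs] at this
  have hval : ∫ t in (0:ℝ)..1, L * ‖u‖^2 * t = L / 2 * ‖u‖^2 := by
    rw [intervalIntegral.integral_const_mul, integral_id]; ring
  calc |∫ t in (0:ℝ)..1, (G t - G 0)| ≤ |∫ t in (0:ℝ)..1, L * ‖u‖^2 * t| := this.trans (le_abs_self _)
    _ = L / 2 * ‖u‖^2 := by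
        rw [hval]; exact abs_of_nonneg (mul_nonneg (by linarith) (sq_nonneg _))

lemma three_sq (a b c : ℝ) : (a+b+c)^2 ≤ 3*a^2+3*b^2+3*c^2 := by
  nlinarith [sq_nonneg (a-b), sq_nonneg (a-c), sq_nonneg (b-c)]

/-- Deterministic (pathwise) core of Lemma 1: flatness incompatibility bound. -/
theorem flatness_incompatibility_deterministic
    {H : Type*} [NormedAddCommGroup H] [InnerProductSpace ℝ H] [CompleteSpace H]
    {N : ℕ} (hN : 0 < N)
    (Fi : Fin N → H → ℝ) (L : ℝ) (hL : 0 < L)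
    (hdiff : ∀ i, Differentiable ℝ (Fi i))
    (hlip : ∀ i, ∀ x y : H, ‖gradient (Fi i) x - gradient (Fi i) y‖ ≤ L * ‖x - y‖)
    (F : H → ℝ) (hF : F = fun x => (1 / (N : ℝ)) * ∑ i, Fi i x)
    (θ : H) (hθ : ∀ i, gradient (Fi i) θ ≠ 0)
    (ρ : ℝ) (hρ : 0 < ρ)
    (g : Fin N → H) (hg : ∀ i, g i ≠ 0)
    (δ : Fin N → H) (hδ : ∀ i, δ i = gradient (Fi i) θ - gradient F θ)
    (ζ : Fin N → H) (hζ : ∀ i, ζ i = g i - gradient (Fi i) θ)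
    (s : Fin N → ℝ)
    (hs : ∀ i, s i = Fi i (θ + (ρ / ‖g i‖) • g i) - Fi i θ)
    (sbar : ℝ) (hsbar : sbar = (1 / (N : ℝ)) * ∑ j, s j)
    (ΔFI : ℝ) (hΔ : ΔFI = (1 / (N : ℝ)) * ∑ i, (s i - sbar) ^ 2) :
    ΔFI ≤ (3 * ρ ^ 2 / (N : ℝ)) * ∑ i, (‖δ i‖ ^ 2 + 4 * ‖ζ i‖ ^ 2)
        + (3 / 4) * L ^ 2 * ρ ^ 4 := by
  have hNpos : (0:ℝ) < (N:ℝ) := by exact_mod_cast hN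
  set c : ℝ := ρ * ‖gradient F θ‖ with hc
  -- pointwise bound
  have key : ∀ i, (s i - c)^2 ≤ 3*ρ^2*(‖δ i‖^2 + 4*‖ζ i‖^2) + (3/4)*L^2*ρ^4 := by
    intro i
    have hgn : ‖g i‖ ≠ 0 := norm_ne_zero_iff.mpr (hg i)
    have hgn' : (0:ℝ) < ‖g i‖ := norm_pos_iff.mpr (hg i)
    have hnu : ‖(ρ / ‖g i‖) • g i‖ = ρ := by
      rw [norm_smul, Real.norm_eq_abs, abs_of_nonneg (by positivity), div_mul_cancel₀ _ hgn]
    have h1 : |s i - inner ℝ (gradient (Fi i) θ) ((ρ / ‖g i‖) • g i)| ≤ L/2 * ρ^2 := by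
      have h := descent_lemma (hdiff i) hL.le (hlip i) θ ((ρ / ‖g i‖) • g i)
      rw [hnu] at h
      rw [hs i]
      exact h
    have hGieq : gradient (Fi i) θ = g i - ζ i := by rw [hζ i]; abel
    have e1 : (inner ℝ (gradient (Fi i) θ) (g i) : ℝ) = ‖g i‖^2 - inner ℝ (ζ i) (g i) := by
      rw [hGieq, inner_sub_left, real_inner_self_eq_norm_sq]
    have e2 : (inner ℝ (gradient (Fi i) θ) ((ρ / ‖g i‖) • g i) : ℝ)
        = ρ*‖g i‖ - (ρ/‖g i‖) * inner ℝ (ζ i) (g i) := by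
      rw [real_inner_smul_right, e1]
      field_simp
    have b1 : |‖g i‖ - ‖gradient (Fi i) θ‖| ≤ ‖ζ i‖ := by
      have h := abs_norm_sub_norm_le (g i) (gradient (Fi i) θ)
      rwa [← hζ i] at h
    have b2 : |(ρ/‖g i‖) * inner ℝ (ζ i) (g i)| ≤ ρ * ‖ζ i‖ := by
      rw [abs_mul, abs_of_nonneg (by positivity : (0:ℝ) ≤ ρ/‖g i‖)]
      calc ρ/‖g i‖ * |(inner ℝ (ζ i) (g i) : ℝ)| ≤ ρ/‖g i‖ * (‖ζ i‖ * ‖g i‖) := by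
            gcongr
            exact abs_real_inner_le_norm _ _
        _ = ρ * ‖ζ i‖ := by field_simp
    have b3 : |‖gradient (Fi i) θ‖ - ‖gradient F θ‖| ≤ ‖δ i‖ := by
      have h := abs_norm_sub_norm_le (gradient (Fi i) θ) (gradient F θ)
      rwa [← hδ i] at h
    -- combine
    have habs : |s i - c| ≤ ρ*‖δ i‖ + 2*ρ*‖ζ i‖ + L/2*ρ^2 := by
      rw [e2] at h1
      have d1 := abs_le.mp h1
      have d2 := abs_le.mp b1
      have d3 := abs_le.mp b2
      have d4 := abs_le.mp b3
      have m2a := mul_le_mul_of_nonneg_left d2.2 hρ.le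
      have m2b := mul_le_mul_of_nonneg_left d2.1 hρ.le
      have m4a := mul_le_mul_of_nonneg_left d4.2 hρ.le
      have m4b := mul_le_mul_of_nonneg_left d4.1 hρ.le
      rw [mul_neg] at m2b m4b
      rw [abs_le, hc]
      constructor <;> linarith
    have hsq : (s i - c)^2 ≤ (ρ*‖δ i‖ + 2*ρ*‖ζ i‖ + L/2*ρ^2)^2 := by
      rw [← sq_abs (s i - c)]
      exact pow_le_pow_left₀ (abs_nonneg _) habs 2
    calc (s i - c)^2 ≤ (ρ*‖δ i‖ + 2*ρ*‖ζ i‖ + L/2*ρ^2)^2 := hsq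
      _ ≤ 3*(ρ*‖δ i‖)^2 + 3*(2*ρ*‖ζ i‖)^2 + 3*(L/2*ρ^2)^2 := three_sq _ _ _
      _ = 3*ρ^2*(‖δ i‖^2 + 4*‖ζ i‖^2) + (3/4)*L^2*ρ^4 := by ring
  -- variance minimality
  have hsum0 : ∑ i, (s i - sbar) = 0 := by
    rw [Finset.sum_sub_distrib, Finset.sum_const, Finset.card_univ, Fintype.card_fin, hsbar]
    rw [nsmul_eq_mul]
    field_simp
    ring
  have hvar : ∑ i, (s i - sbar)^2 ≤ ∑ i, (s i - c)^2 := by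
    have hid : ∑ i, (s i - c)^2
        = ∑ i, (s i - sbar)^2 + 2*(sbar - c)*(∑ i, (s i - sbar)) + (N:ℝ)*(sbar - c)^2 := by
      have : ∀ i : Fin N, (s i - c)^2
          = (s i - sbar)^2 + 2*(sbar - c)*(s i - sbar) + (sbar - c)^2 := by intro i; ring
      rw [Finset.sum_congr rfl (fun i _ => this i), Finset.sum_add_distrib,
        Finset.sum_add_distrib, ← Finset.mul_sum, Finset.sum_const, Finset.card_univ,
        Fintype.card_fin, nsmul_eq_mul]
    rw [hid, hsum0]
    nlinarith [sq_nonneg (sbar - c), hNpos]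
  have hsum2 : ∑ i, (s i - c)^2
      ≤ ∑ i, (3*ρ^2*(‖δ i‖^2 + 4*‖ζ i‖^2) + (3/4)*L^2*ρ^4) :=
    Finset.sum_le_sum (fun i _ => key i)
  rw [hΔ]
  have hfinal : (1/(N:ℝ)) * ∑ i, (s i - sbar)^2
      ≤ (1/(N:ℝ)) * ∑ i, (3*ρ^2*(‖δ i‖^2 + 4*‖ζ i‖^2) + (3/4)*L^2*ρ^4) := by
    apply mul_le_mul_of_nonneg_left (le_trans hvar hsum2) (by positivity)
  refine le_trans hfinal (le_of_eq ?_)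
  rw [Finset.sum_add_distrib, Finset.sum_const, Finset.card_univ, Fintype.card_fin,
    nsmul_eq_mul, ← Finset.mul_sum]
  have h2 : (1/(N:ℝ)) * ((N:ℝ) * ((3/4)*L^2*ρ^4)) = (3/4)*L^2*ρ^4 := by
    field_simp
  rw [mul_add, h2]
  ring
end

section
/- Let H be a real Hilbert space and F : H → ℝ a differentiable function with L-Lipschitz gradient (L ≥ 0). Let η > 0, ρ ≥ 0, and let θ, θ̃, h ∈ H satisfy ‖θ̃ − θ‖ ≤ ρ. Then ‖h − ∇F(θ − η·h)‖² ≤ (4 + 8L²η²)·‖h − ∇F(θ̃)‖² + 8L²η²·‖∇F(θ̃)‖² + (4L² + 16L⁴η²)·ρ². -/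
/-- One-round tracking estimate for the adjusted direction after a global update. -/
theorem one_round_tracking_estimate
    {H : Type*} [NormedAddCommGroup H] [InnerProductSpace ℝ H] [CompleteSpace H]
    (F : H → ℝ) (L : ℝ) (hL : 0 ≤ L)
    (hdiff : Differentiable ℝ F)
    (hlip : ∀ x y : H, ‖gradient F x - gradient F y‖ ≤ L * ‖x - y‖)
    (η : ℝ) (hη : 0 < η) (ρ : ℝ) (hρ : 0 ≤ ρ)
    (θ θt h : H) (hclose : ‖θt - θ‖ ≤ ρ) :
    ‖h - gradient F (θ - η • h)‖ ^ 2 ≤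
      (4 + 8 * L ^ 2 * η ^ 2) * ‖h - gradient F θt‖ ^ 2
        + 8 * L ^ 2 * η ^ 2 * ‖gradient F θt‖ ^ 2
        + (4 * L ^ 2 + 16 * L ^ 4 * η ^ 2) * ρ ^ 2 := by
  set g := gradient F
  set a := ‖h - g θt‖ with ha
  set G := ‖g θt‖ with hG
  have ha0 : 0 ≤ a := norm_nonneg _
  have hG0 : 0 ≤ G := norm_nonneg _
  have hh : ‖h‖ ≤ a + G := by
    calc ‖h‖ = ‖(h - g θt) + g θt‖ := by rw [sub_add_cancel]
    _ ≤ a + G := norm_add_le _ _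
  have hdist : ‖θt - (θ - η • h)‖ ≤ ρ + η * ‖h‖ := by
    calc ‖θt - (θ - η • h)‖ = ‖(θt - θ) + η • h‖ := by abel_nf
    _ ≤ ‖θt - θ‖ + ‖η • h‖ := norm_add_le _ _
    _ ≤ ρ + η * ‖h‖ := by
        rw [norm_smul, Real.norm_eq_abs, abs_of_pos hη]
        linarith
  have key : ‖h - g (θ - η • h)‖ ≤ a + L * (ρ + η * (a + G)) := by
    calc ‖h - g (θ - η • h)‖ = ‖(h - g θt) + (g θt - g (θ - η • h))‖ := by abel_nf
    _ ≤ ‖h - g θt‖ + ‖g θt - g (θ - η • h)‖ := norm_add_le _ _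
    _ ≤ a + L * ‖θt - (θ - η • h)‖ := by
        have := hlip θt (θ - η • h); linarith
    _ ≤ a + L * (ρ + η * ‖h‖) := by
        have := mul_le_mul_of_nonneg_left hdist hL; linarith
    _ ≤ a + L * (ρ + η * (a + G)) := by
        have : η * ‖h‖ ≤ η * (a + G) := mul_le_mul_of_nonneg_left hh hη.le
        nlinarith
  have hn0 : 0 ≤ ‖h - g (θ - η • h)‖ := norm_nonneg _
  have hrhs0 : 0 ≤ a + L * (ρ + η * (a + G)) := by positivity
  have hsq : ‖h - g (θ - η • h)‖ ^ 2 ≤ (a + L * (ρ + η * (a + G))) ^ 2 :=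
    pow_le_pow_left₀ hn0 key 2
  nlinarith [sq_nonneg (a - L * η * (a + G)), sq_nonneg (a + L * η * (a + G) - L * ρ),
    sq_nonneg (L * η * (a - G)), sq_nonneg (L * ρ), sq_nonneg (L ^ 2 * η * ρ)]
end
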